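/- For L > 0 and t > 0, define the Gaussian interval overlap I_L(t) = ∫_0^L ∫_0^L exp(−t(x − y)²) dx dy. Then for every fixed t > 0, the function u ↦ log I_{e^u}(t) is strictly concave on ℝ. -/

import Mathlib

open MeasureTheory Real

/-- The one-dimensional Gaussian interval overlap `I_L(t)`. -/
noncomputable def intervalOverlap (L t : ℝ) : ℝ :=
  ∫ x in Set.Icc (0 : ℝ) L, ∫ y in Set.Icc (0 : ℝ) L, Real.exp (-t * (x - y) ^ 2)

open intervalIntegral

noncomputable def Eint (t L : ℝ) : ℝ := ∫ z in (0:ℝ)..L, Real.exp (-t * z ^ 2)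

noncomputable def Fc (t L : ℝ) : ℝ :=
  2 * L * Eint t L + (Real.exp (-t * L ^ 2) - 1) / t

lemma contE (t : ℝ) : Continuous (fun z : ℝ => Real.exp (-t * z ^ 2)) := by
  continuity

lemma hasDerivAt_Eint (t L : ℝ) : HasDerivAt (Eint t) (Real.exp (-t * L ^ 2)) L :=
  ((contE t).integral_hasStrictDerivAt 0 L).hasDerivAt

lemma contEint (t : ℝ) : Continuous (Eint t) := by
  have : Differentiable ℝ (Eint t) := fun L => (hasDerivAt_Eint t L).differentiableAt
  exact this.continuous

lemma Eint_pos {t L : ℝ} (hL : 0 < L) : 0 < Eint t L :=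
  intervalIntegral_pos_of_pos ((contE t).intervalIntegrable 0 L) (fun x => Real.exp_pos _) hL

lemma Eint_lt {t L : ℝ} (ht : 0 < t) (hL : 0 < L) : Eint t L < L := by
  have h : Eint t L < ∫ _ in (0:ℝ)..L, (1:ℝ) := by
    apply integral_lt_integral_of_continuousOn_of_le_of_exists_lt hL
      ((contE t).continuousOn) continuousOn_const
    · intro x _
      rw [← Real.exp_zero]
      apply Real.exp_le_exp.2
      nlinarith [sq_nonneg x]
    · refine ⟨L, ⟨hL.le, le_refl L⟩, ?_⟩
      rw [← Real.exp_zero]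
      apply Real.exp_lt_exp.2
      nlinarith [pow_pos hL 2]
  simpa using h

lemma Eint_odd (t L : ℝ) : Eint t (-L) = - Eint t L := by
  have h1 : Eint t (-L) = ∫ x in (0:ℝ)..(-L), Real.exp (-t * (-x) ^ 2) := by
    simp [Eint, neg_sq]
  have h2 := intervalIntegral.integral_comp_neg (a := (0:ℝ)) (b := -L)
    (f := fun z : ℝ => Real.exp (-t * z ^ 2))
  rw [h1, h2, neg_neg, neg_zero, intervalIntegral.integral_symm]
  rfl

lemma hasDerivAt_Fc (t L : ℝ) (ht : 0 < t) : HasDerivAt (Fc t) (2 * Eint t L) L := by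
  have h1 : HasDerivAt (fun L => 2 * L * Eint t L)
      (2 * Eint t L + 2 * L * Real.exp (-t * L ^ 2)) L := by
    have := ((hasDerivAt_id L).const_mul 2).mul (hasDerivAt_Eint t L)
    refine this.congr_deriv ?_
    simp [id_def]
  have h2 : HasDerivAt (fun L : ℝ => (Real.exp (-t * L ^ 2) - 1) / t)
      (-(2 * L * Real.exp (-t * L ^ 2))) L := by
    have hL2 : HasDerivAt (fun L : ℝ => -t * L ^ 2) (-t * (2 * L)) L := by
      simpa using ((hasDerivAt_pow 2 L).const_mul (-t))
    have := ((hL2.exp).sub_const 1).div_const t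
    refine this.congr_deriv ?_
    field_simp
  have := h1.add h2
  refine this.congr_deriv ?_
  ring

lemma Fc_eq_integral (t L : ℝ) (ht : 0 < t) :
    Fc t L = ∫ z in (0:ℝ)..L, 2 * Eint t z := by
  have h := intervalIntegral.integral_eq_sub_of_hasDerivAt
    (f := Fc t) (f' := fun z => 2 * Eint t z) (a := 0) (b := L)
    (fun x _ => hasDerivAt_Fc t x ht)
    ((continuous_const.mul (contEint t)).intervalIntegrable 0 L)
  rw [h]
  simp [Fc]

lemma Fc_pos {t L : ℝ} (ht : 0 < t) (hL : 0 < L) : 0 < Fc t L := by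
  rw [Fc_eq_integral t L ht]
  exact intervalIntegral_pos_of_pos_on
    ((continuous_const.mul (contEint t)).intervalIntegrable 0 L)
    (fun x hx => by have := Eint_pos (t := t) hx.1; linarith) hL

lemma overlap_eq {t L : ℝ} (ht : 0 < t) (hL : 0 ≤ L) : intervalOverlap L t = Fc t L := by
  have icc : ∀ g : ℝ → ℝ, (∫ x in Set.Icc (0:ℝ) L, g x) = ∫ x in (0:ℝ)..L, g x := by
    intro g
    rw [MeasureTheory.integral_Icc_eq_integral_Ioc, intervalIntegral.integral_of_le hL]
  have step1 : intervalOverlap L t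
      = ∫ x in (0:ℝ)..L, (Eint t x + Eint t (L - x)) := by
    rw [intervalOverlap, icc]
    apply intervalIntegral.integral_congr
    intro x _
    simp only []
    rw [icc]
    have h := intervalIntegral.integral_comp_sub_left (a := (0:ℝ)) (b := L)
      (fun z : ℝ => Real.exp (-t * z ^ 2)) x
    have h2 : Eint t x - Eint t (x - L)
        = ∫ z in (x - L)..x, Real.exp (-t * z ^ 2) := by
      have := intervalIntegral.integral_interval_sub_left (μ := volume) (a := (0:ℝ)) (b := x) (c := x - L)
        (f := fun z : ℝ => Real.exp (-t * z ^ 2)) ((contE t).intervalIntegrable 0 x)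
        ((contE t).intervalIntegrable 0 (x - L))
      simpa [Eint] using this
    have h3 : Eint t (x - L) = - Eint t (L - x) := by
      have := Eint_odd t (L - x)
      simpa [neg_sub] using this
    calc (∫ y in (0:ℝ)..L, Real.exp (-t * (x - y) ^ 2))
        = ∫ z in (x - L)..(x - 0), Real.exp (-t * z ^ 2) := h
      _ = Eint t x - Eint t (x - L) := by rw [sub_zero, ← h2]
      _ = Eint t x + Eint t (L - x) := by rw [h3]; ring
  have hi1 : IntervalIntegrable (fun x => Eint t x) volume 0 L :=
    (contEint t).intervalIntegrable 0 L
  have hi2 : IntervalIntegrable (fun x => Eint t (L - x)) volume 0 L :=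
    ((contEint t).comp (continuous_const.sub continuous_id)).intervalIntegrable 0 L
  rw [step1, intervalIntegral.integral_add hi1 hi2]
  have h4 : (∫ x in (0:ℝ)..L, Eint t (L - x)) = ∫ x in (0:ℝ)..L, Eint t x := by
    rw [intervalIntegral.integral_comp_sub_left (Eint t) L]
    simp
  rw [h4, Fc_eq_integral t L ht, intervalIntegral.integral_const_mul]
  ring

lemma aux_exp {s : ℝ} (hs : 0 ≤ s) :
    2 * s * Real.exp (-s) + Real.exp (-s) ^ 2 ≤ 1 := by
  have hD : 1 + s + s ^ 2 / 2 ≤ Real.exp s := Real.quadratic_le_exp_of_nonneg hs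
  have hx : 0 < Real.exp (-s) := Real.exp_pos _
  have hxs : Real.exp (-s) * Real.exp s = 1 := by
    rw [← Real.exp_add]; simp
  have h1 : Real.exp (-s) * (1 + s + s ^ 2 / 2) ≤ 1 := by
    calc Real.exp (-s) * (1 + s + s ^ 2 / 2) ≤ Real.exp (-s) * Real.exp s :=
          mul_le_mul_of_nonneg_left hD hx.le
      _ = 1 := hxs
  nlinarith [sq_nonneg (s ^ 2), mul_le_mul h1 h1 (by positivity) (by positivity),
    mul_le_mul_of_nonneg_left h1 (by positivity : (0:ℝ) ≤ 2 * s), sq_nonneg s, hx.le]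

lemma key_ineq {t L : ℝ} (ht : 0 < t) (hL : 0 < L) :
    (2 * L * Eint t L + 2 * L ^ 2 * Real.exp (-t * L ^ 2)) * Fc t L
      < (2 * L * Eint t L) ^ 2 := by
  set E := Eint t L with hE
  set x := Real.exp (-t * L ^ 2) with hx
  set s := t * L ^ 2 with hs
  have hs0 : 0 < s := by positivity
  have hx0 : 0 < x := Real.exp_pos _
  have hx1 : x < 1 := by
    rw [hx, ← Real.exp_zero]
    exact Real.exp_lt_exp.2 (by nlinarith)
  have hE0 : 0 < E := Eint_pos hL
  have hEL : E < L := Eint_lt ht hL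
  have core : E * ((1 + 2 * s) * x - 1) < L * (x * (1 - x)) := by
    rcases le_or_gt ((1 + 2 * s) * x) 1 with hc | hc
    · have h1 : E * ((1 + 2 * s) * x - 1) ≤ 0 :=
        mul_nonpos_of_nonneg_of_nonpos hE0.le (by linarith)
      have h2 : 0 < L * (x * (1 - x)) := mul_pos hL (mul_pos hx0 (by linarith))
      linarith
    · have h1 : E * ((1 + 2 * s) * x - 1) < L * ((1 + 2 * s) * x - 1) :=
        mul_lt_mul_of_pos_right hEL (by linarith)
      have h2 : (1 + 2 * s) * x - 1 ≤ x * (1 - x) := by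
        have h := aux_exp hs0.le
        have hxe : Real.exp (-s) = x := by rw [hx, hs, neg_mul]
        rw [hxe] at h
        nlinarith
      have h3 : L * ((1 + 2 * s) * x - 1) ≤ L * (x * (1 - x)) :=
        mul_le_mul_of_nonneg_left h2 hL.le
      linarith
  have hFc : Fc t L = 2 * L * E + (x - 1) / t := rfl
  have expand : (2 * L * E + 2 * L ^ 2 * x) * Fc t L - (2 * L * E) ^ 2
      = (2 * L / t) * (E * ((1 + 2 * s) * x - 1) - L * (x * (1 - x))) := by
    rw [hFc, hs]
    field_simp
    ring
  nlinarith [mul_pos (mul_pos two_pos hL) (inv_pos.2 ht), div_pos (mul_pos two_pos hL) ht,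
    mul_neg_of_pos_of_neg (div_pos (mul_pos two_pos hL) ht) (by linarith : E * ((1 + 2 * s) * x - 1) - L * (x * (1 - x)) < 0)]

theorem stmt_16 (t : ℝ) (ht : 0 < t) :
    StrictConcaveOn ℝ Set.univ (fun u : ℝ => Real.log (intervalOverlap (Real.exp u) t)) := by
  have hfun : (fun u : ℝ => Real.log (intervalOverlap (Real.exp u) t))
      = fun u : ℝ => Real.log (Fc t (Real.exp u)) :=
    funext fun u => by rw [overlap_eq ht (Real.exp_pos u).le]
  rw [hfun]
  set g : ℝ → ℝ := fun u => Real.log (Fc t (Real.exp u)) with hg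
  have hFpos : ∀ u : ℝ, 0 < Fc t (Real.exp u) := fun u => Fc_pos ht (Real.exp_pos u)
  -- derivative of u ↦ Fc t (exp u)
  have hG : ∀ u : ℝ, HasDerivAt (fun u => Fc t (Real.exp u))
      (2 * Eint t (Real.exp u) * Real.exp u) u := fun u =>
    (hasDerivAt_Fc t (Real.exp u) ht).comp u (Real.hasDerivAt_exp u)
  set D : ℝ → ℝ := fun u => 2 * Eint t (Real.exp u) * Real.exp u / Fc t (Real.exp u) with hD
  have hg' : ∀ u : ℝ, HasDerivAt g (D u) u := fun u =>
    (hG u).log (hFpos u).ne'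
  have hderiv : deriv g = D := funext fun u => (hg' u).deriv
  -- derivative of numerator N u = 2 * Eint t (exp u) * exp u
  have hN : ∀ u : ℝ, HasDerivAt (fun u => 2 * Eint t (Real.exp u) * Real.exp u)
      (2 * Real.exp (-t * (Real.exp u) ^ 2) * Real.exp u * Real.exp u
        + 2 * Eint t (Real.exp u) * Real.exp u) u := by
    intro u
    have h1 : HasDerivAt (fun u => Eint t (Real.exp u))
        (Real.exp (-t * (Real.exp u) ^ 2) * Real.exp u) u :=
      (hasDerivAt_Eint t (Real.exp u)).comp u (Real.hasDerivAt_exp u)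
    have := ((h1.const_mul 2).mul (Real.hasDerivAt_exp u))
    refine this.congr_deriv ?_
    ring
  have hD' : ∀ u : ℝ, HasDerivAt D
      (((2 * Real.exp (-t * (Real.exp u) ^ 2) * Real.exp u * Real.exp u
          + 2 * Eint t (Real.exp u) * Real.exp u) * Fc t (Real.exp u)
        - 2 * Eint t (Real.exp u) * Real.exp u * (2 * Eint t (Real.exp u) * Real.exp u))
        / (Fc t (Real.exp u)) ^ 2) u := fun u =>
    (hN u).div (hG u) (hFpos u).ne'
  have hneg : ∀ u : ℝ, deriv^[2] g u < 0 := by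
    intro u
    have : deriv^[2] g u = deriv (deriv g) u := by
      simp [Function.iterate_succ, Function.comp]
    rw [this, hderiv, (hD' u).deriv]
    apply div_neg_of_neg_of_pos
    · have hkey := key_ineq ht (Real.exp_pos u)
      set L := Real.exp u
      nlinarith [hkey]
    · exact pow_pos (hFpos u) 2
  apply strictConcaveOn_of_deriv2_neg convex_univ
  · exact fun u _ => ((hg' u).differentiableAt.continuousAt).continuousWithinAt
  · intro u _
    exact hneg u
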